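/- arXiv:1903.09915 — 2 statements merged into one kernel-verified Lean document; each statement's English description precedes it below -/
import Mathlib

section
/- For the Crank–Nicolson finite difference scheme ε²δₜ²uⱼⁿ + [−(1/2)δₓ² + 1/(2ε²) + (λ/4)((uⱼⁿ⁺¹)² + (uⱼⁿ⁻¹)²)](uⱼⁿ⁺¹ + uⱼⁿ⁻¹) = 0 with periodic boundary conditions uⁿ₀ = uⁿ_N, the discrete energy Eⁿ = ε²‖δₜ⁺uⁿ‖²_{l²} + (1/2)(‖δₓ⁺uⁿ‖²_{l²} + ‖δₓ⁺uⁿ⁺¹‖²_{l²}) + 1/(2ε²)(‖uⁿ‖²_{l²} + ‖uⁿ⁺¹‖²_{l²}) + (hλ/4)Σⱼ((uⱼⁿ)⁴ + (uⱼⁿ⁺¹)⁴) satisfies Eⁿ⁺¹ = Eⁿ for all n ≥ 0. -/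
private lemma shift_sum (N : ℕ) (F : ℤ → ℝ) (hF : F (N : ℤ) = F 0) :
    ∑ j ∈ Finset.range N, F ((j : ℤ) + 1) = ∑ j ∈ Finset.range N, F (j : ℤ) := by
  have h1 : ∑ j ∈ Finset.range (N+1), F (j : ℤ)
      = (∑ j ∈ Finset.range N, F (j : ℤ)) + F (N : ℤ) := Finset.sum_range_succ _ _
  have h2 : ∑ j ∈ Finset.range (N+1), F (j : ℤ)
      = (∑ j ∈ Finset.range N, F ((j : ℤ) + 1)) + F 0 := by
    rw [Finset.sum_range_succ']
    congr 1
    all_goals first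
      | rfl
      | exact Finset.sum_congr rfl (fun j _ => by push_cast; ring_nf)
  linarith [h1, h2]

/-- Discrete energy conservation for the Crank–Nicolson finite difference (CNFD)
discretization of the nonlinear Klein–Gordon equation, with `N`-periodic real
sequences `u n : ℤ → ℝ`. -/
theorem stmt1 (ε lam τ h : ℝ) (hε : 0 < ε) (hτ : 0 < τ) (hh : 0 < h)
    (N : ℕ) (hN : 0 < N)
    (u : ℕ → ℤ → ℝ)
    -- periodic boundary conditions: u is N-periodic in j (in particular u₀ⁿ = u_Nⁿ)
    (hper : ∀ n : ℕ, ∀ j : ℤ, u n (j + N) = u n j)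
    -- the CNFD scheme:  ε²δₜ²uⱼⁿ + [−½δₓ² + 1/(2ε²) + (λ/4)((uⱼⁿ⁺¹)²+(uⱼⁿ⁻¹)²)](uⱼⁿ⁺¹+uⱼⁿ⁻¹) = 0
    (hscheme : ∀ n : ℕ, ∀ j : ℤ,
      ε ^ 2 * ((u (n+2) j - 2 * u (n+1) j + u n j) / τ ^ 2)
        + (- (1/2) * (((u (n+2) (j+1) + u n (j+1)) - 2 * (u (n+2) j + u n j)
              + (u (n+2) (j-1) + u n (j-1))) / h ^ 2)
          + (1 / (2 * ε ^ 2)) * (u (n+2) j + u n j)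
          + (lam / 4) * ((u (n+2) j) ^ 2 + (u n j) ^ 2) * (u (n+2) j + u n j)) = 0) :
    -- the discrete energy Eⁿ is conserved: Eⁿ⁺¹ = Eⁿ for all n ≥ 0
    ∀ n : ℕ,
      (ε ^ 2 * (h * ∑ j ∈ Finset.range N, ((u (n+2) j - u (n+1) j) / τ) ^ 2)
        + (1/2) * ((h * ∑ j ∈ Finset.range N, ((u (n+1) (j+1) - u (n+1) j) / h) ^ 2)
            + (h * ∑ j ∈ Finset.range N, ((u (n+2) (j+1) - u (n+2) j) / h) ^ 2))
        + (1 / (2 * ε ^ 2)) * ((h * ∑ j ∈ Finset.range N, (u (n+1) j) ^ 2)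
            + (h * ∑ j ∈ Finset.range N, (u (n+2) j) ^ 2))
        + (h * lam / 4) * ∑ j ∈ Finset.range N, ((u (n+1) j) ^ 4 + (u (n+2) j) ^ 4))
      =
      (ε ^ 2 * (h * ∑ j ∈ Finset.range N, ((u (n+1) j - u n j) / τ) ^ 2)
        + (1/2) * ((h * ∑ j ∈ Finset.range N, ((u n (j+1) - u n j) / h) ^ 2)
            + (h * ∑ j ∈ Finset.range N, ((u (n+1) (j+1) - u (n+1) j) / h) ^ 2))
        + (1 / (2 * ε ^ 2)) * ((h * ∑ j ∈ Finset.range N, (u n j) ^ 2)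
            + (h * ∑ j ∈ Finset.range N, (u (n+1) j) ^ 2))
        + (h * lam / 4) * ∑ j ∈ Finset.range N, ((u n j) ^ 4 + (u (n+1) j) ^ 4)) := by
  intro n
  -- the summation-by-parts boundary flux
  set F : ℤ → ℝ := fun j =>
    ((u (n+2) j + u n j) - (u (n+2) (j-1) + u n (j-1))) * (u (n+2) j - u n j) / (2*h)
    with hFdef
  -- periodicity facts
  have hUN : ∀ m : ℕ, u m (N : ℤ) = u m 0 := fun m => by
    have := hper m 0; rwa [zero_add] at this
  have hUN1 : ∀ m : ℕ, u m ((N : ℤ) - 1) = u m (-1) := fun m => by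
    have := hper m (-1)
    rw [show (N : ℤ) - 1 = -1 + N by ring, this]
  have hFper : F (N : ℤ) = F 0 := by
    simp only [hFdef, hUN, hUN1, zero_sub]
  -- pointwise energy identity
  have pt : ∀ j : ℤ,
      (ε ^ 2 * h * ((u (n+2) j - u (n+1) j) / τ) ^ 2
        + (1/2) * h * ((u (n+1) (j+1) - u (n+1) j) / h) ^ 2
        + (1/2) * h * ((u (n+2) (j+1) - u (n+2) j) / h) ^ 2
        + (1 / (2 * ε ^ 2)) * h * (u (n+1) j) ^ 2
        + (1 / (2 * ε ^ 2)) * h * (u (n+2) j) ^ 2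
        + (h * lam / 4) * ((u (n+1) j) ^ 4 + (u (n+2) j) ^ 4))
      - (ε ^ 2 * h * ((u (n+1) j - u n j) / τ) ^ 2
        + (1/2) * h * ((u n (j+1) - u n j) / h) ^ 2
        + (1/2) * h * ((u (n+1) (j+1) - u (n+1) j) / h) ^ 2
        + (1 / (2 * ε ^ 2)) * h * (u n j) ^ 2
        + (1 / (2 * ε ^ 2)) * h * (u (n+1) j) ^ 2
        + (h * lam / 4) * ((u n j) ^ 4 + (u (n+1) j) ^ 4))
      = h * (ε ^ 2 * ((u (n+2) j - 2 * u (n+1) j + u n j) / τ ^ 2)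
          + (- (1/2) * (((u (n+2) (j+1) + u n (j+1)) - 2 * (u (n+2) j + u n j)
                + (u (n+2) (j-1) + u n (j-1))) / h ^ 2)
            + (1 / (2 * ε ^ 2)) * (u (n+2) j + u n j)
            + (lam / 4) * ((u (n+2) j) ^ 2 + (u n j) ^ 2) * (u (n+2) j + u n j)))
          * (u (n+2) j - u n j)
        + (F (j+1) - F j) := by
    intro j
    simp only [hFdef, add_sub_cancel_right]
    field_simp
    ring
  -- sum of scheme terms vanishes
  have sum0 : ∑ j ∈ Finset.range N,
      (h * (ε ^ 2 * ((u (n+2) (j:ℤ) - 2 * u (n+1) (j:ℤ) + u n (j:ℤ)) / τ ^ 2)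
          + (- (1/2) * (((u (n+2) ((j:ℤ)+1) + u n ((j:ℤ)+1)) - 2 * (u (n+2) (j:ℤ) + u n (j:ℤ))
                + (u (n+2) ((j:ℤ)-1) + u n ((j:ℤ)-1))) / h ^ 2)
            + (1 / (2 * ε ^ 2)) * (u (n+2) (j:ℤ) + u n (j:ℤ))
            + (lam / 4) * ((u (n+2) (j:ℤ)) ^ 2 + (u n (j:ℤ)) ^ 2) * (u (n+2) (j:ℤ) + u n (j:ℤ))))
          * (u (n+2) (j:ℤ) - u n (j:ℤ))) = 0 :=
    Finset.sum_eq_zero fun j _ => by rw [hscheme n (j:ℤ)]; ring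
  -- telescoping flux sum vanishes
  have sumF : ∑ j ∈ Finset.range N, (F ((j:ℤ)+1) - F (j:ℤ)) = 0 := by
    rw [Finset.sum_sub_distrib, shift_sum N F hFper, sub_self]
  -- combine
  have key : ∑ j ∈ Finset.range N,
      ((ε ^ 2 * h * ((u (n+2) (j:ℤ) - u (n+1) (j:ℤ)) / τ) ^ 2
        + (1/2) * h * ((u (n+1) ((j:ℤ)+1) - u (n+1) (j:ℤ)) / h) ^ 2
        + (1/2) * h * ((u (n+2) ((j:ℤ)+1) - u (n+2) (j:ℤ)) / h) ^ 2
        + (1 / (2 * ε ^ 2)) * h * (u (n+1) (j:ℤ)) ^ 2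
        + (1 / (2 * ε ^ 2)) * h * (u (n+2) (j:ℤ)) ^ 2
        + (h * lam / 4) * ((u (n+1) (j:ℤ)) ^ 4 + (u (n+2) (j:ℤ)) ^ 4))
      - (ε ^ 2 * h * ((u (n+1) (j:ℤ) - u n (j:ℤ)) / τ) ^ 2
        + (1/2) * h * ((u n ((j:ℤ)+1) - u n (j:ℤ)) / h) ^ 2
        + (1/2) * h * ((u (n+1) ((j:ℤ)+1) - u (n+1) (j:ℤ)) / h) ^ 2
        + (1 / (2 * ε ^ 2)) * h * (u n (j:ℤ)) ^ 2
        + (1 / (2 * ε ^ 2)) * h * (u (n+1) (j:ℤ)) ^ 2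
        + (h * lam / 4) * ((u n (j:ℤ)) ^ 4 + (u (n+1) (j:ℤ)) ^ 4))) = 0 := by
    calc _ = ∑ j ∈ Finset.range N,
        ((h * (ε ^ 2 * ((u (n+2) (j:ℤ) - 2 * u (n+1) (j:ℤ) + u n (j:ℤ)) / τ ^ 2)
          + (- (1/2) * (((u (n+2) ((j:ℤ)+1) + u n ((j:ℤ)+1)) - 2 * (u (n+2) (j:ℤ) + u n (j:ℤ))
                + (u (n+2) ((j:ℤ)-1) + u n ((j:ℤ)-1))) / h ^ 2)
            + (1 / (2 * ε ^ 2)) * (u (n+2) (j:ℤ) + u n (j:ℤ))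
            + (lam / 4) * ((u (n+2) (j:ℤ)) ^ 2 + (u n (j:ℤ)) ^ 2) * (u (n+2) (j:ℤ) + u n (j:ℤ))))
          * (u (n+2) (j:ℤ) - u n (j:ℤ))) + (F ((j:ℤ)+1) - F (j:ℤ))) :=
          Finset.sum_congr rfl (fun j _ => pt (j:ℤ))
      _ = 0 := by rw [Finset.sum_add_distrib, sum0, sumF, add_zero]
  -- expand the combined sum into the individual sums and finish
  have expand := key
  simp only [sub_eq_iff_eq_add, Finset.sum_sub_distrib, Finset.sum_add_distrib,
    ← Finset.mul_sum] at expand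
  simp only [Finset.sum_add_distrib]
  linarith [expand]
end

section
/- Let ε > 0 and let z, r : [0,τ] → ℂ be C² functions (spatially homogeneous case, Δ ≡ 0). Define u(s) = e^{is/ε²}z(s) + e^{−is/ε²}z̄(s) + r(s). If z satisfies 2i z' + ε²z'' + 3λ|z|²z = 0 and r satisfies ε²r'' + r/ε² + f_r(z, r; s) = 0, where f_r(z,r;s) = λe^{3is/ε²}z³ + λe^{−3is/ε²}z̄³ + 3λ(e^{2is/ε²}z² + e^{−2is/ε²}z̄²)r + 3λ(e^{is/ε²}z + e^{−is/ε²}z̄)r² + 6λ|z|²r + λr³, then u satisfies the Klein–Gordon ODE ε²u'' + u/ε² + λu³ = 0. -/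
open Complex

/-- Exactness of the multiscale decomposition by frequency (spatially homogeneous case):
if `z` solves `2iz' + ε²z'' + 3λ|z|²z = 0` and `r` solves `ε²r'' + r/ε² + f_r(z,r;s) = 0`,
then `u(s) = e^{is/ε²}z(s) + e^{−is/ε²}z̄(s) + r(s)` solves `ε²u'' + u/ε² + λu³ = 0`. -/
theorem stmt12 (ε lam τ : ℝ) (hε : 0 < ε) (hτ : 0 < τ)
    (z r : ℝ → ℂ) (hz : ContDiff ℝ 2 z) (hr : ContDiff ℝ 2 r)
    (hzeq : ∀ s ∈ Set.Icc (0:ℝ) τ,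
      2 * Complex.I * deriv z s + (ε : ℂ) ^ 2 * deriv (deriv z) s
        + 3 * (lam : ℂ) * (((‖z s‖ : ℝ) : ℂ)) ^ 2 * z s = 0)
    (hreq : ∀ s ∈ Set.Icc (0:ℝ) τ,
      (ε : ℂ) ^ 2 * deriv (deriv r) s + r s / (ε : ℂ) ^ 2
        + ((lam : ℂ) * Complex.exp (3 * Complex.I * (s : ℂ) / (ε : ℂ) ^ 2) * (z s) ^ 3
          + (lam : ℂ) * Complex.exp (-3 * Complex.I * (s : ℂ) / (ε : ℂ) ^ 2)
              * (starRingEnd ℂ (z s)) ^ 3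
          + 3 * (lam : ℂ) * (Complex.exp (2 * Complex.I * (s : ℂ) / (ε : ℂ) ^ 2) * (z s) ^ 2
              + Complex.exp (-2 * Complex.I * (s : ℂ) / (ε : ℂ) ^ 2)
                  * (starRingEnd ℂ (z s)) ^ 2) * r s
          + 3 * (lam : ℂ) * (Complex.exp (Complex.I * (s : ℂ) / (ε : ℂ) ^ 2) * z s
              + Complex.exp (-Complex.I * (s : ℂ) / (ε : ℂ) ^ 2) * starRingEnd ℂ (z s))
              * (r s) ^ 2
          + 6 * (lam : ℂ) * (((‖z s‖ : ℝ) : ℂ)) ^ 2 * r s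
          + (lam : ℂ) * (r s) ^ 3) = 0) :
    let u : ℝ → ℂ := fun s =>
      Complex.exp (Complex.I * (s : ℂ) / (ε : ℂ) ^ 2) * z s
        + Complex.exp (-Complex.I * (s : ℂ) / (ε : ℂ) ^ 2) * starRingEnd ℂ (z s) + r s
    ∀ s ∈ Set.Icc (0:ℝ) τ,
      (ε : ℂ) ^ 2 * deriv (deriv u) s + u s / (ε : ℂ) ^ 2 + (lam : ℂ) * (u s) ^ 3 = 0 := by
  intro u s hs
  have hε2 : ((ε : ℂ) ^ 2) ≠ 0 := pow_ne_zero 2 (Complex.ofReal_ne_zero.mpr hε.ne')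
  -- abbreviations for the two frequencies
  set a : ℂ := Complex.I / (ε : ℂ) ^ 2 with ha
  set b : ℂ := -(Complex.I / (ε : ℂ) ^ 2) with hb
  -- differentiability facts
  have hzd : Differentiable ℝ z := hz.differentiable (by norm_num)
  have hzd2 : Differentiable ℝ (deriv z) := by
    have := (contDiff_succ_iff_deriv (n := 1)).mp (by exact_mod_cast hz)
    exact this.2.2.differentiable one_ne_zero
  have hrd : Differentiable ℝ r := hr.differentiable (by norm_num)
  have hrd2 : Differentiable ℝ (deriv r) := by
    have := (contDiff_succ_iff_deriv (n := 1)).mp (by exact_mod_cast hr)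
    exact this.2.2.differentiable one_ne_zero
  -- derivative of complex exponentials
  have hexpgen : ∀ (w : ℂ) (t : ℝ),
      HasDerivAt (fun y : ℝ => Complex.exp (w * (y : ℂ))) (w * Complex.exp (w * (t : ℂ))) t := by
    intro w t
    have h1 : HasDerivAt (fun y : ℝ => w * (y : ℂ)) w t := by
      simpa using (Complex.ofRealCLM.hasDerivAt (x := t)).const_mul w
    simpa [mul_comm] using h1.cexp
  -- the decomposition, written with the frequencies `a`, `b`
  set v : ℝ → ℂ := fun t =>
    Complex.exp (a * (t : ℂ)) * z t + Complex.exp (b * (t : ℂ)) * star (z t) + r t with hv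
  have huv : u = v := by
    funext t
    show Complex.exp (Complex.I * (t : ℂ) / (ε : ℂ) ^ 2) * z t
        + Complex.exp (-Complex.I * (t : ℂ) / (ε : ℂ) ^ 2) * starRingEnd ℂ (z t) + r t = _
    rw [hv, starRingEnd_apply]
    have e1 : Complex.I * (t : ℂ) / (ε : ℂ) ^ 2 = a * (t : ℂ) := by rw [ha]; ring
    have e2 : -Complex.I * (t : ℂ) / (ε : ℂ) ^ 2 = b * (t : ℂ) := by rw [hb]; ring
    rw [e1, e2]
  -- first derivative
  set v1 : ℝ → ℂ := fun t =>
    (a * Complex.exp (a * (t : ℂ)) * z t + Complex.exp (a * (t : ℂ)) * deriv z t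
      + (b * Complex.exp (b * (t : ℂ)) * star (z t)
        + Complex.exp (b * (t : ℂ)) * star (deriv z t))) + deriv r t with hv1
  have hvt : ∀ t : ℝ, HasDerivAt v (v1 t) t := by
    intro t
    have H := ((((hexpgen a t).mul (hzd t).hasDerivAt).add
        ((hexpgen b t).mul ((hzd t).hasDerivAt.star))).add (hrd t).hasDerivAt)
    rw [hv1]
    convert H using 1 <;> first | rfl | ring
  -- second derivative
  set v2 : ℝ → ℂ := fun t =>
    (a * a * Complex.exp (a * (t : ℂ)) * z t + 2 * a * Complex.exp (a * (t : ℂ)) * deriv z t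
      + Complex.exp (a * (t : ℂ)) * deriv (deriv z) t
      + (b * b * Complex.exp (b * (t : ℂ)) * star (z t)
        + 2 * b * Complex.exp (b * (t : ℂ)) * star (deriv z t)
        + Complex.exp (b * (t : ℂ)) * star (deriv (deriv z) t))) + deriv (deriv r) t with hv2
  have hv1t : ∀ t : ℝ, HasDerivAt v1 (v2 t) t := by
    intro t
    have H := (((((hexpgen a t).const_mul a).mul (hzd t).hasDerivAt).add
          ((hexpgen a t).mul (hzd2 t).hasDerivAt)).add
        ((((hexpgen b t).const_mul b).mul ((hzd t).hasDerivAt.star)).add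
          ((hexpgen b t).mul ((hzd2 t).hasDerivAt.star)))).add (hrd2 t).hasDerivAt
    rw [hv2]
    convert H using 1 <;> first | rfl | ring
  have hdu : deriv u = v1 := by
    rw [huv]; exact funext fun t => (hvt t).deriv
  have hddu : deriv (deriv u) s = v2 s := by
    rw [hdu]; exact (hv1t s).deriv
  have hus : u s = Complex.exp (a * (s : ℂ)) * z s
      + Complex.exp (b * (s : ℂ)) * star (z s) + r s := by rw [huv]
  rw [hddu, hus, hv2]
  -- abbreviate the exponentials at s
  set X : ℂ := Complex.exp (a * (s : ℂ)) with hX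
  set Y : ℂ := Complex.exp (b * (s : ℂ)) with hY
  have hXY : X * Y = 1 := by
    rw [hX, hY, ← Complex.exp_add, show a * (s : ℂ) + b * (s : ℂ) = 0 by rw [ha, hb]; ring,
      Complex.exp_zero]
  have hinv : (ε : ℂ) ^ 2 * ((ε : ℂ) ^ 2)⁻¹ = 1 := mul_inv_cancel₀ hε2
  -- rewrite |z|²
  have habs : (((‖z s‖ : ℝ) : ℂ)) ^ 2 = z s * star (z s) := by
    rw [← Complex.ofReal_pow, Complex.sq_norm, ← Complex.mul_conj, starRingEnd_apply]
  -- hypotheses at s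
  have hzeq' := hzeq s hs
  have hzc := congrArg (starRingEnd ℂ) (hzeq s hs)
  simp only [map_add, map_mul, map_pow, map_ofNat, Complex.conj_I, Complex.conj_ofReal,
    map_zero] at hzc
  simp only [starRingEnd_apply] at hzc
  rw [habs] at hzeq' hzc
  have hreq' := hreq s hs
  simp only [starRingEnd_apply] at hreq'
  have e3 : Complex.exp (3 * Complex.I * (s : ℂ) / (ε : ℂ) ^ 2) = X ^ 3 := by
    rw [hX, ← Complex.exp_nat_mul]
    congr 1; rw [ha]; push_cast; ring
  have e3' : Complex.exp (-3 * Complex.I * (s : ℂ) / (ε : ℂ) ^ 2) = Y ^ 3 := by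
    rw [hY, ← Complex.exp_nat_mul]
    congr 1; rw [hb]; push_cast; ring
  have e2 : Complex.exp (2 * Complex.I * (s : ℂ) / (ε : ℂ) ^ 2) = X ^ 2 := by
    rw [hX, ← Complex.exp_nat_mul]
    congr 1; rw [ha]; push_cast; ring
  have e2' : Complex.exp (-2 * Complex.I * (s : ℂ) / (ε : ℂ) ^ 2) = Y ^ 2 := by
    rw [hY, ← Complex.exp_nat_mul]
    congr 1; rw [hb]; push_cast; ring
  have e1 : Complex.exp (Complex.I * (s : ℂ) / (ε : ℂ) ^ 2) = X := by
    rw [hX]; congr 1; rw [ha]; ring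
  have e1' : Complex.exp (-Complex.I * (s : ℂ) / (ε : ℂ) ^ 2) = Y := by
    rw [hY]; congr 1; rw [hb]; ring
  rw [e3, e3', e2, e2', e1, e1', habs] at hreq'
  rw [ha] at *
  rw [hb] at *
  have hI : Complex.I ^ 2 = -1 := Complex.I_sq
  linear_combination X * hzeq' + Y * hzc + hreq'
    + (3 * (lam : ℂ) * (X * (z s) ^ 2 * star (z s) + Y * (z s) * (star (z s)) ^ 2
        + 2 * (z s) * star (z s) * (r s))) * hXY
    + (2 * Complex.I * (X * deriv z s - Y * star (deriv z s))
        - (X * z s + Y * star (z s)) * ((ε : ℂ) ^ 2)⁻¹) * hinv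
    + ((X * z s + Y * star (z s)) * (ε : ℂ) ^ 2 * (((ε : ℂ) ^ 2)⁻¹) ^ 2) * hI
end
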